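/- arXiv:1209.1291 — 4 statements merged into one kernel-verified Lean document; each statement's English description precedes it below -/
import Mathlib

section
/- Let N, M1, M2 be positive integers with M1 > N and M2 > N, and set A = min(M1, 2N) and B = min(M2, 2N). Then the region D = {(d1, d2) ∈ ℝ² : d1 ≥ 0, d2 ≥ 0, d1/A + d2/N ≤ 1, d1/N + d2/B ≤ 1} is equal to the convex hull of the four points (0,0), (N,0), (0,N), and (d1*, d2*), where d1* = N·A·(B − N)/(A·B − N²) and d2* = N·B·(A − N)/(A·B − N²). -/
lemma combo4 {z0 z1 z2 z3 : ℝ × ℝ} {w0 w1 w2 w3 : ℝ}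
    (h0 : 0 ≤ w0) (h1 : 0 ≤ w1) (h2 : 0 ≤ w2) (h3 : 0 ≤ w3)
    (hs : w0 + w1 + w2 + w3 = 1) :
    w0 • z0 + w1 • z1 + w2 • z2 + w3 • z3 ∈ convexHull ℝ ({z0, z1, z2, z3} : Set (ℝ × ℝ)) := by
  have := (convex_convexHull ℝ ({z0, z1, z2, z3} : Set (ℝ × ℝ))).sum_mem
    (t := (Finset.univ : Finset (Fin 4))) (w := ![w0, w1, w2, w3]) (z := ![z0, z1, z2, z3])
    (fun i _ => by fin_cases i <;> simpa)
    (by simp [Fin.sum_univ_four]; linarith)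
    (fun i _ => by fin_cases i <;> simp <;> exact subset_convexHull ℝ _ (by simp))
  simpa [Fin.sum_univ_four] using this

set_option maxHeartbeats 1000000 in
/-- The DoF region of the (M1, M2, N, N) MIMO IC with no CSIT and full-duplex
receiver cooperation (M1, M2 > N) is the convex hull of (0,0), (N,0), (0,N)
and the retro-cooperative interference alignment corner point. -/
theorem stmt_1 (N M1 M2 : ℕ) (hN : 0 < N) (hM1 : N < M1) (hM2 : N < M2)
    (A B d1star d2star : ℝ)
    (hA : A = min (M1 : ℝ) (2 * N)) (hB : B = min (M2 : ℝ) (2 * N))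
    (hd1 : d1star = N * A * (B - N) / (A * B - N ^ 2))
    (hd2 : d2star = N * B * (A - N) / (A * B - N ^ 2)) :
    {p : ℝ × ℝ | 0 ≤ p.1 ∧ 0 ≤ p.2 ∧ p.1 / A + p.2 / N ≤ 1 ∧ p.1 / N + p.2 / B ≤ 1}
      = convexHull ℝ {((0 : ℝ), (0 : ℝ)), ((N : ℝ), 0), (0, (N : ℝ)), (d1star, d2star)} := by
  have hN0 : (0 : ℝ) < N := by exact_mod_cast hN
  have hNA : (N : ℝ) < A := by
    rw [hA]
    refine lt_min (by exact_mod_cast hM1) (by linarith)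
  have hNB : (N : ℝ) < B := by
    rw [hB]
    refine lt_min (by exact_mod_cast hM2) (by linarith)
  have hA0 : (0 : ℝ) < A := lt_trans hN0 hNA
  have hB0 : (0 : ℝ) < B := lt_trans hN0 hNB
  have hden : (0 : ℝ) < A * B - N ^ 2 := by nlinarith
  have hd1pos : 0 < d1star := by
    rw [hd1]; exact div_pos (mul_pos (mul_pos hN0 hA0) (sub_pos.2 hNB)) hden
  have hd2pos : 0 < d2star := by
    rw [hd2]; exact div_pos (mul_pos (mul_pos hN0 hB0) (sub_pos.2 hNA)) hden
  have rel1 : d1star * N + d2star * A = N * A := by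
    rw [hd1, hd2]; field_simp; ring
  have rel2 : d1star * B + d2star * N = N * B := by
    rw [hd1, hd2]; field_simp; ring
  apply Set.eq_of_subset_of_subset
  · -- region ⊆ hull
    rintro ⟨x, y⟩ ⟨hx, hy, h1, h2⟩
    simp only [Set.mem_setOf_eq] at hx hy h1 h2 ⊢
    -- multiplied-out constraints
    have hp1 : x * N + A * y ≤ A * N := by
      rw [div_add_div _ _ hA0.ne' hN0.ne', div_le_one (by positivity)] at h1
      linarith
    have hp2 : x * B + N * y ≤ N * B := by
      rw [div_add_div _ _ hN0.ne' hB0.ne', div_le_one (by positivity)] at h2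
      linarith
    rcases le_total (y * d1star) (x * d2star) with hcase | hcase
    · set b : ℝ := y / d2star with hbdef
      set a : ℝ := (x * d2star - y * d1star) / (N * d2star) with hadef
      have hb0 : 0 ≤ b := div_nonneg hy hd2pos.le
      have ha0 : 0 ≤ a := div_nonneg (by linarith) (by positivity)
      have hab : a + b ≤ 1 := by
        rw [hadef, hbdef, div_add_div _ _ (by positivity) hd2pos.ne',
          div_le_one (by positivity)]
        have key : x * d2star - y * d1star + ↑N * y ≤ ↑N * d2star := by
          have h7 : B * (x * d2star - y * d1star + ↑N * y) ≤ B * (↑N * d2star) := by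
            calc B * (x * d2star - y * d1star + ↑N * y)
                = d2star * (x * B + ↑N * y) - y * (d1star * B + d2star * ↑N - ↑N * B) := by
                  ring
              _ = d2star * (x * B + ↑N * y) - y * (↑N * B - ↑N * B) := by rw [rel2]
              _ = d2star * (x * B + ↑N * y) := by ring
              _ ≤ d2star * (↑N * B) := mul_le_mul_of_nonneg_left hp2 hd2pos.le
              _ = B * (↑N * d2star) := by ring
          exact le_of_mul_le_mul_left h7 hB0
        nlinarith [mul_le_mul_of_nonneg_left key hd2pos.le]
      have hx1 : x = a * N + b * d1star := by
        rw [hadef, hbdef]; field_simp; ring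
      have hy1 : y = b * d2star := by
        rw [hbdef]; field_simp
      have hpe : ((x, y) : ℝ × ℝ) =
          (1 - a - b) • ((0 : ℝ), (0 : ℝ)) + a • ((N : ℝ), 0) + (0 : ℝ) • (0, (N : ℝ))
            + b • (d1star, d2star) := by
        simp only [Prod.smul_mk, Prod.mk_add_mk, smul_eq_mul, Prod.mk.injEq]
        constructor <;> linarith [hx1, hy1]
      rw [hpe]
      exact combo4 (by linarith) ha0 le_rfl hb0 (by ring)
    · set b : ℝ := x / d1star with hbdef
      set a : ℝ := (y * d1star - x * d2star) / (N * d1star) with hadef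
      have hb0 : 0 ≤ b := div_nonneg hx hd1pos.le
      have ha0 : 0 ≤ a := div_nonneg (by linarith) (by positivity)
      have hab : a + b ≤ 1 := by
        rw [hadef, hbdef, div_add_div _ _ (by positivity) hd1pos.ne',
          div_le_one (by positivity)]
        have key : y * d1star - x * d2star + ↑N * x ≤ ↑N * d1star := by
          have h7 : A * (y * d1star - x * d2star + ↑N * x) ≤ A * (↑N * d1star) := by
            calc A * (y * d1star - x * d2star + ↑N * x)
                = d1star * (x * ↑N + A * y) - x * (d1star * ↑N + d2star * A - ↑N * A) := by
                  ring
              _ = d1star * (x * ↑N + A * y) - x * (↑N * A - ↑N * A) := by rw [rel1]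
              _ = d1star * (x * ↑N + A * y) := by ring
              _ ≤ d1star * (A * ↑N) := mul_le_mul_of_nonneg_left hp1 hd1pos.le
              _ = A * (↑N * d1star) := by ring
          exact le_of_mul_le_mul_left h7 hA0
        nlinarith [mul_le_mul_of_nonneg_left key hd1pos.le]
      have hy1 : y = a * N + b * d2star := by
        rw [hadef, hbdef]; field_simp; ring
      have hx1 : x = b * d1star := by
        rw [hbdef]; field_simp
      have hpe : ((x, y) : ℝ × ℝ) =
          (1 - a - b) • ((0 : ℝ), (0 : ℝ)) + (0 : ℝ) • ((N : ℝ), 0) + a • (0, (N : ℝ))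
            + b • (d1star, d2star) := by
        simp only [Prod.smul_mk, Prod.mk_add_mk, smul_eq_mul, Prod.mk.injEq]
        constructor <;> linarith [hx1, hy1]
      rw [hpe]
      exact combo4 (by linarith) le_rfl ha0 hb0 (by ring)
  · -- hull ⊆ region
    apply convexHull_min
    · rintro p hp
      simp only [Set.mem_insert_iff, Set.mem_singleton_iff] at hp
      rcases hp with rfl | rfl | rfl | rfl
      · refine ⟨le_rfl, le_rfl, by simp, by simp⟩
      · refine ⟨hN0.le, le_rfl, ?_, ?_⟩
        · simp only
          rw [zero_div, add_zero, div_le_one hA0]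
          linarith
        · simp only
          rw [zero_div, add_zero, div_self hN0.ne']
      · refine ⟨le_rfl, hN0.le, ?_, ?_⟩
        · simp only
          rw [zero_div, zero_add, div_le_one hN0]
        · simp only
          rw [zero_div, zero_add, div_le_one hB0]
          linarith
      · refine ⟨hd1pos.le, hd2pos.le, ?_, ?_⟩
        · simp only
          rw [div_add_div _ _ hA0.ne' hN0.ne', div_le_one (by positivity)]
          nlinarith [rel1]
        · simp only
          rw [div_add_div _ _ hN0.ne' hB0.ne', div_le_one (by positivity)]
          nlinarith [rel2]
    · -- convexity of the region
      intro p hp q hq s t hs ht hst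
      obtain ⟨hp0, hp0', hp1, hp2⟩ := hp
      obtain ⟨hq0, hq0', hq1, hq2⟩ := hq
      refine ⟨?_, ?_, ?_, ?_⟩
      · simp only [Prod.fst_add, Prod.smul_fst, smul_eq_mul]
        exact add_nonneg (mul_nonneg hs hp0) (mul_nonneg ht hq0)
      · simp only [Prod.snd_add, Prod.smul_snd, smul_eq_mul]
        exact add_nonneg (mul_nonneg hs hp0') (mul_nonneg ht hq0')
      · simp only [Prod.fst_add, Prod.snd_add, Prod.smul_fst, Prod.smul_snd, smul_eq_mul]
        calc (s * p.1 + t * q.1) / A + (s * p.2 + t * q.2) / N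
            = s * (p.1 / A + p.2 / N) + t * (q.1 / A + q.2 / N) := by ring
          _ ≤ s * 1 + t * 1 := add_le_add (mul_le_mul_of_nonneg_left hp1 hs)
              (mul_le_mul_of_nonneg_left hq1 ht)
          _ = 1 := by linarith
      · simp only [Prod.fst_add, Prod.snd_add, Prod.smul_fst, Prod.smul_snd, smul_eq_mul]
        calc (s * p.1 + t * q.1) / N + (s * p.2 + t * q.2) / B
            = s * (p.1 / N + p.2 / B) + t * (q.1 / N + q.2 / B) := by ring
          _ ≤ s * 1 + t * 1 := add_le_add (mul_le_mul_of_nonneg_left hp2 hs)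
              (mul_le_mul_of_nonneg_left hq2 ht)
          _ = 1 := by linarith
end

section
/- Let N, M1, M2 be positive integers with M1 > N and M2 > N, and set A = min(M1, 2N) and B = min(M2, 2N). Over the region D = {(d1, d2) ∈ ℝ² : d1 ≥ 0, d2 ≥ 0, d1/A + d2/N ≤ 1, d1/N + d2/B ≤ 1}, the maximum value of d1 + d2 equals N·(2·A·B − N·(A + B))/(A·B − N²); it is attained at the point (N·A·(B − N)/(A·B − N²), N·B·(A − N)/(A·B − N²)); and this maximum is strictly greater than N. -/
/-- Sum-DoF maximization over the DoF region of the (M1, M2, N, N) MIMO IC with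
no CSIT and full-duplex receiver cooperation (M1, M2 > N): the maximum of
d1 + d2 equals N(2AB - N(A+B))/(AB - N²), is attained at the corner point, and
strictly exceeds N (the sum-DoF without receiver cooperation). -/
theorem stmt_2 (N M1 M2 : ℕ) (hN : 0 < N) (hM1 : N < M1) (hM2 : N < M2)
    (A B : ℝ)
    (hA : A = min (M1 : ℝ) (2 * N)) (hB : B = min (M2 : ℝ) (2 * N))
    (D : Set (ℝ × ℝ))
    (hD : D = {p : ℝ × ℝ | 0 ≤ p.1 ∧ 0 ≤ p.2 ∧
      p.1 / A + p.2 / N ≤ 1 ∧ p.1 / N + p.2 / B ≤ 1}) :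
    IsGreatest ((fun p : ℝ × ℝ => p.1 + p.2) '' D)
        (N * (2 * A * B - N * (A + B)) / (A * B - N ^ 2)) ∧
      (N * A * (B - N) / (A * B - N ^ 2), N * B * (A - N) / (A * B - N ^ 2)) ∈ D ∧
      N * A * (B - N) / (A * B - N ^ 2) + N * B * (A - N) / (A * B - N ^ 2)
        = N * (2 * A * B - N * (A + B)) / (A * B - N ^ 2) ∧
      (N : ℝ) < N * (2 * A * B - N * (A + B)) / (A * B - N ^ 2) := by
  have hn0 : (0:ℝ) < N := by exact_mod_cast hN
  have hNA : (N:ℝ) < A := by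
    rw [hA]; exact lt_min (by exact_mod_cast hM1) (by linarith)
  have hNB : (N:ℝ) < B := by
    rw [hB]; exact lt_min (by exact_mod_cast hM2) (by linarith)
  have hA2 : A ≤ 2 * N := hA ▸ min_le_right _ _
  have hB2 : B ≤ 2 * N := hB ▸ min_le_right _ _
  have hA0 : (0:ℝ) < A := lt_trans hn0 hNA
  have hB0 : (0:ℝ) < B := lt_trans hn0 hNB
  have hpos : (0:ℝ) < A * B - N ^ 2 := by nlinarith
  have hmem : (N * A * (B - N) / (A * B - N ^ 2), N * B * (A - N) / (A * B - N ^ 2)) ∈ D := by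
    rw [hD]
    refine ⟨div_nonneg (le_of_lt (mul_pos (mul_pos hn0 hA0) (sub_pos.2 hNB))) (le_of_lt hpos),
      div_nonneg (le_of_lt (mul_pos (mul_pos hn0 hB0) (sub_pos.2 hNA))) (le_of_lt hpos), ?_, ?_⟩
    · rw [div_div, div_div,
        div_add_div _ _ (mul_ne_zero (ne_of_gt hpos) (ne_of_gt hA0))
          (mul_ne_zero (ne_of_gt hpos) (ne_of_gt hn0)),
        div_le_one (by positivity)]
      ring_nf
      nlinarith [sq_nonneg (A*B - (N:ℝ)^2)]
    · rw [div_div, div_div,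
        div_add_div _ _ (mul_ne_zero (ne_of_gt hpos) (ne_of_gt hn0))
          (mul_ne_zero (ne_of_gt hpos) (ne_of_gt hB0)),
        div_le_one (by positivity)]
      ring_nf
      nlinarith [sq_nonneg (A*B - (N:ℝ)^2)]
  have hsum : N * A * (B - N) / (A * B - N ^ 2) + N * B * (A - N) / (A * B - N ^ 2)
      = N * (2 * A * B - N * (A + B)) / (A * B - N ^ 2) := by
    rw [← add_div]; ring_nf
  refine ⟨⟨⟨_, hmem, hsum⟩, ?_⟩, hmem, hsum, ?_⟩
  · rintro x ⟨p, hp, rfl⟩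
    rw [hD] at hp
    obtain ⟨h1, h2, h3, h4⟩ := hp
    rw [div_add_div _ _ (ne_of_gt hA0) (ne_of_gt hn0), div_le_one (by positivity)] at h3
    rw [div_add_div _ _ (ne_of_gt hn0) (ne_of_gt hB0), div_le_one (by positivity)] at h4
    simp only
    rw [le_div_iff₀ hpos]
    nlinarith [mul_le_mul_of_nonneg_left h3 (le_of_lt (sub_pos.2 hNB)),
      mul_le_mul_of_nonneg_left h4 (le_of_lt (sub_pos.2 hNA))]
  · rw [lt_div_iff₀ hpos]
    nlinarith [mul_pos (sub_pos.2 hNA) (sub_pos.2 hNB)]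
end

section
/- Let N, M be positive integers with M > N, and set M' = min(M, 2N). Over the region D = {(d1, d2) ∈ ℝ² : d1 ≥ 0, d2 ≥ 0, d1/M' + d2/N ≤ 1, d1/N + d2/M' ≤ 1}, the maximum value of d1 + d2 equals 2·M'·N/(M' + N); it is attained at (Q, Q) with Q = M'·N/(M' + N); and this maximum is strictly greater than N. -/
/-- Sum-DoF maximization over the DoF region of the (M, N, N) MIMO BC with no
CSIT and full-duplex receiver cooperation (M > N): the maximum of d1 + d2 is
2M'N/(M'+N), attained at (Q, Q), and strictly exceeds N. -/
theorem stmt_5 (N M : ℕ) (hN : 0 < N) (hM : N < M)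
    (M' Q : ℝ) (hM' : M' = min (M : ℝ) (2 * N))
    (hQ : Q = M' * N / (M' + N))
    (D : Set (ℝ × ℝ))
    (hD : D = {p : ℝ × ℝ | 0 ≤ p.1 ∧ 0 ≤ p.2 ∧
      p.1 / M' + p.2 / N ≤ 1 ∧ p.1 / N + p.2 / M' ≤ 1}) :
    IsGreatest ((fun p : ℝ × ℝ => p.1 + p.2) '' D) (2 * M' * N / (M' + N)) ∧
      (Q, Q) ∈ D ∧ Q + Q = 2 * M' * N / (M' + N) ∧
      (N : ℝ) < 2 * M' * N / (M' + N) := by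
  have hNpos : (0 : ℝ) < N := by exact_mod_cast hN
  have hNM' : (N : ℝ) < M' := by
    rw [hM']
    have h1 : (N : ℝ) < M := by exact_mod_cast hM
    have h2 : (N : ℝ) < 2 * N := by linarith
    exact lt_min h1 h2
  have hM'pos : (0 : ℝ) < M' := lt_trans hNpos hNM'
  have hsum : (0 : ℝ) < M' + N := by linarith
  have hQpos : 0 ≤ Q := by
    rw [hQ]; positivity
  have key : Q * (M' + N) = M' * N := by
    rw [hQ]; field_simp
  have hQmem : (Q, Q) ∈ D := by
    rw [hD]
    refine ⟨hQpos, hQpos, ?_, ?_⟩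
    · rw [div_add_div _ _ (ne_of_gt hM'pos) (ne_of_gt hNpos), div_le_one (by positivity)]
      nlinarith [key]
    · rw [div_add_div _ _ (ne_of_gt hNpos) (ne_of_gt hM'pos), div_le_one (by positivity)]
      nlinarith [key]
  have hQsum : Q + Q = 2 * M' * N / (M' + N) := by
    rw [hQ]; field_simp; ring
  refine ⟨⟨⟨(Q, Q), hQmem, hQsum⟩, ?_⟩, hQmem, hQsum, ?_⟩
  · rintro x ⟨p, hp, rfl⟩
    simp only
    rw [hD] at hp
    obtain ⟨h1, h2, h3, h4⟩ := hp
    rw [div_add_div _ _ (ne_of_gt hM'pos) (ne_of_gt hNpos), div_le_one (by positivity)] at h3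
    rw [div_add_div _ _ (ne_of_gt hNpos) (ne_of_gt hM'pos), div_le_one (by positivity)] at h4
    rw [le_div_iff₀ hsum]
    nlinarith
  · rw [lt_div_iff₀ hsum]
    nlinarith
end

section
/- Let N, M1, M2 be positive integers with M1 > N and M2 > N, and set A = min(M1, 2N) and B = min(M2, 2N). Then the region D0 = {(d1, d2) ∈ ℝ² : d1 ≥ 0, d2 ≥ 0, d1 + d2 ≤ N} is a strict subset of the region D = {(d1, d2) ∈ ℝ² : d1 ≥ 0, d2 ≥ 0, d1/A + d2/N ≤ 1, d1/N + d2/B ≤ 1}; in particular the point (N·A·(B − N)/(A·B − N²), N·B·(A − N)/(A·B − N²)) belongs to D but not to D0. -/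
/-- Full-duplex receiver cooperation strictly enlarges the DoF region of the
(M1, M2, N, N) MIMO IC with no CSIT when M1, M2 > N: the no-cooperation region
D0 is a strict subset of the cooperation region D, with the corner point of D
witnessing strictness. -/
theorem stmt_13 (N M1 M2 : ℕ) (hN : 0 < N) (hM1 : N < M1) (hM2 : N < M2)
    (A B : ℝ)
    (hA : A = min (M1 : ℝ) (2 * N)) (hB : B = min (M2 : ℝ) (2 * N))
    (D0 D : Set (ℝ × ℝ))
    (hD0 : D0 = {p : ℝ × ℝ | 0 ≤ p.1 ∧ 0 ≤ p.2 ∧ p.1 + p.2 ≤ (N : ℝ)})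
    (hD : D = {p : ℝ × ℝ | 0 ≤ p.1 ∧ 0 ≤ p.2 ∧
      p.1 / A + p.2 / N ≤ 1 ∧ p.1 / N + p.2 / B ≤ 1}) :
    D0 ⊂ D ∧
      (N * A * (B - N) / (A * B - N ^ 2), N * B * (A - N) / (A * B - N ^ 2)) ∈ D ∧
      (N * A * (B - N) / (A * B - N ^ 2), N * B * (A - N) / (A * B - N ^ 2)) ∉ D0 := by
  have hNR : (0 : ℝ) < N := by exact_mod_cast hN
  have hM1R : (N : ℝ) < M1 := by exact_mod_cast hM1
  have hM2R : (N : ℝ) < M2 := by exact_mod_cast hM2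
  have hNA : (N : ℝ) < A := by rw [hA]; apply lt_min hM1R; linarith
  have hNB : (N : ℝ) < B := by rw [hB]; apply lt_min hM2R; linarith
  have hApos : (0 : ℝ) < A := lt_trans hNR hNA
  have hBpos : (0 : ℝ) < B := lt_trans hNR hNB
  have hden : (0 : ℝ) < A * B - N ^ 2 := by nlinarith
  have hBN : (0:ℝ) < B - N := sub_pos.mpr hNB
  have hAN : (0:ℝ) < A - N := sub_pos.mpr hNA
  -- membership of witness in D
  have hw1 : 0 ≤ N * A * (B - N) / (A * B - N ^ 2) := by positivity
  have hw2 : 0 ≤ N * B * (A - N) / (A * B - N ^ 2) := by positivity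
  have hwD : (N * A * (B - N) / (A * B - N ^ 2), N * B * (A - N) / (A * B - N ^ 2)) ∈ D := by
    rw [hD]
    refine ⟨hw1, hw2, le_of_eq ?_, le_of_eq ?_⟩ <;>
    · simp only
      field_simp
      ring
  have hwD0 : (N * A * (B - N) / (A * B - N ^ 2), N * B * (A - N) / (A * B - N ^ 2)) ∉ D0 := by
    rw [hD0]
    intro h
    obtain ⟨-, -, h3⟩ := h
    simp only at h3
    rw [← add_div, div_le_iff₀ hden] at h3
    nlinarith [mul_pos hAN hBN]
  have hsub : D0 ⊆ D := by
    rw [hD0, hD]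
    rintro ⟨x, y⟩ ⟨hx, hy, hxy⟩
    have h1 : x / A ≤ x / N := div_le_div_of_nonneg_left hx hNR hNA.le
    have h2 : y / B ≤ y / N := div_le_div_of_nonneg_left hy hNR hNB.le
    have h3 : x / N + y / N ≤ 1 := by
      rw [← add_div, div_le_one hNR]; exact hxy
    exact ⟨hx, hy, by simp only; linarith, by simp only; linarith⟩
  exact ⟨⟨hsub, fun h => hwD0 (h hwD)⟩, hwD, hwD0⟩
end
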